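/- Let φ(t) = (1/n)Σ_j exp(iμ_j t - σ_j²t²/2) with all σ_j ≥ σ₀ > 0, the proportion of j with (μ_j,σ_j) ≠ (μ₀,σ₀) at most ε₀ < 1/2. For γ ∈ (0,1/2) define t_n(γ) = inf{t ∈ [0, log n] : |φ(t)| = n^{-γ}} (which exists for n large). Then t_n(γ) = (√(2γ log n)/σ₀)·(1 + o(1)) as n → ∞. -/

import Mathlib

open Complex Real Finset Filter

set_option maxHeartbeats 1000000

theorem stmt15 (μ₀ σ₀ ε₀ γ : ℝ) (hσ : 0 < σ₀) (hε : 0 < ε₀) (hε' : ε₀ < 1 / 2)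
    (hγ : 0 < γ) (hγ' : γ < 1 / 2)
    (μ σ : (n : ℕ) → Fin n → ℝ)
    (hσj : ∀ n j, σ₀ ≤ σ n j)
    (hprop : ∀ n : ℕ,
      ((Finset.univ.filter (fun j => (μ n j, σ n j) ≠ (μ₀, σ₀))).card : ℝ) ≤ ε₀ * n)
    (φ : ℕ → ℝ → ℂ)
    (hφ : ∀ (n : ℕ) (t : ℝ), φ n t = (1 / n : ℝ) *
      ∑ j, Complex.exp (Complex.I * (μ n j) * t - (σ n j) ^ 2 * t ^ 2 / 2))
    (tn : ℕ → ℝ)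
    (htn : ∀ n : ℕ, tn n =
      sInf {t : ℝ | t ∈ Set.Icc 0 (Real.log n) ∧ ‖φ n t‖ = (n : ℝ) ^ (-γ)}) :
    Tendsto (fun n : ℕ => tn n / (Real.sqrt (2 * γ * Real.log n) / σ₀)) atTop (nhds 1) := by
  set C : ℝ := 2 * Real.log (1 - 2 * ε₀) with hC
  have h2ε : (0:ℝ) < 1 - 2 * ε₀ := by linarith
  -- pointwise abs of each summand
  have habs : ∀ (n : ℕ) (j : Fin n) (t : ℝ),
      ‖Complex.exp (Complex.I * (μ n j) * t - (σ n j) ^ 2 * t ^ 2 / 2)‖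
        = Real.exp (-((σ n j) ^ 2 * t ^ 2 / 2)) := by
    intro n j t
    rw [Complex.norm_exp]
    congr 1
    simp [Complex.sub_re, Complex.mul_re, Complex.div_re, ← Complex.ofReal_pow]
  have habsle : ∀ (n : ℕ) (j : Fin n) (t : ℝ),
      ‖Complex.exp (Complex.I * (μ n j) * t - (σ n j) ^ 2 * t ^ 2 / 2)‖
        ≤ Real.exp (-(σ₀ ^ 2 * t ^ 2 / 2)) := by
    intro n j t
    rw [habs]
    apply Real.exp_le_exp.2
    have : σ₀ ^ 2 ≤ (σ n j) ^ 2 := by nlinarith [hσj n j]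
    nlinarith [sq_nonneg t]
  -- upper bound on |φ|
  have hupper : ∀ (n : ℕ), 0 < n → ∀ (t : ℝ),
      ‖φ n t‖ ≤ Real.exp (-(σ₀ ^ 2 * t ^ 2 / 2)) := by
    intro n hn t
    have hnpos : (0:ℝ) < n := Nat.cast_pos.2 hn
    rw [hφ, norm_mul, Complex.norm_real, Real.norm_eq_abs]
    have h1 : ‖∑ j, Complex.exp (Complex.I * (μ n j) * t - (σ n j) ^ 2 * t ^ 2 / 2)‖
        ≤ n * Real.exp (-(σ₀ ^ 2 * t ^ 2 / 2)) := by
      calc ‖∑ j, Complex.exp (Complex.I * (μ n j) * t - (σ n j) ^ 2 * t ^ 2 / 2)‖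
          ≤ ∑ j, ‖Complex.exp (Complex.I * (μ n j) * t - (σ n j) ^ 2 * t ^ 2 / 2)‖ :=
            norm_sum_le _ _
        _ ≤ ∑ _j : Fin n, Real.exp (-(σ₀ ^ 2 * t ^ 2 / 2)) :=
            Finset.sum_le_sum (fun j _ => habsle n j t)
        _ = n * Real.exp (-(σ₀ ^ 2 * t ^ 2 / 2)) := by simp [Finset.card_univ]
    calc |1 / (n:ℝ)| * ‖∑ j, Complex.exp (Complex.I * (μ n j) * t - (σ n j) ^ 2 * t ^ 2 / 2)‖
        ≤ (1/n) * (n * Real.exp (-(σ₀ ^ 2 * t ^ 2 / 2))) := by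
          rw [abs_of_pos (by positivity)]
          exact mul_le_mul_of_nonneg_left h1 (by positivity)
      _ = Real.exp (-(σ₀ ^ 2 * t ^ 2 / 2)) := by field_simp
  -- lower bound on |φ|
  have hlower : ∀ (n : ℕ), 0 < n → ∀ (t : ℝ),
      (1 - 2 * ε₀) * Real.exp (-(σ₀ ^ 2 * t ^ 2 / 2)) ≤ ‖φ n t‖ := by
    intro n hn t
    have hnpos : (0:ℝ) < n := Nat.cast_pos.2 hn
    set E := Real.exp (-(σ₀ ^ 2 * t ^ 2 / 2)) with hE
    have hEpos : 0 < E := Real.exp_pos _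
    set Bd := Finset.univ.filter (fun j : Fin n => (μ n j, σ n j) ≠ (μ₀, σ₀)) with hBd
    set Gd := Finset.univ.filter (fun j : Fin n => (μ n j, σ n j) = (μ₀, σ₀)) with hGd
    have hsplit : ∑ j, Complex.exp (Complex.I * (μ n j) * t - (σ n j) ^ 2 * t ^ 2 / 2)
        = (∑ j ∈ Gd, Complex.exp (Complex.I * (μ n j) * t - (σ n j) ^ 2 * t ^ 2 / 2))
          + ∑ j ∈ Bd, Complex.exp (Complex.I * (μ n j) * t - (σ n j) ^ 2 * t ^ 2 / 2) := by
      rw [hGd, hBd]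
      exact (Finset.sum_filter_add_sum_filter_not _ _ _).symm
    have hGval : (∑ j ∈ Gd, Complex.exp (Complex.I * (μ n j) * t - (σ n j) ^ 2 * t ^ 2 / 2))
        = (Gd.card : ℂ) * Complex.exp (Complex.I * μ₀ * t - (σ₀:ℂ) ^ 2 * t ^ 2 / 2) := by
      rw [Finset.sum_congr rfl (fun j hj => ?_), Finset.sum_const, nsmul_eq_mul]
      have hj' := (Finset.mem_filter.1 hj).2
      have h1 : μ n j = μ₀ := congrArg Prod.fst hj'
      have h2 : σ n j = σ₀ := congrArg Prod.snd hj'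
      rw [h1, h2]
    have hGabs : ‖∑ j ∈ Gd, Complex.exp (Complex.I * (μ n j) * t - (σ n j) ^ 2 * t ^ 2 / 2)‖
        = (Gd.card : ℝ) * E := by
      rw [hGval, norm_mul]
      have : ‖Complex.exp (Complex.I * (μ₀:ℂ) * t - (σ₀:ℂ) ^ 2 * t ^ 2 / 2)‖ = E := by
        rw [Complex.norm_exp, hE]
        congr 1
        simp [Complex.sub_re, Complex.mul_re, Complex.div_re, ← Complex.ofReal_pow]
      rw [this]
      simp
    have hBabs : ‖∑ j ∈ Bd, Complex.exp (Complex.I * (μ n j) * t - (σ n j) ^ 2 * t ^ 2 / 2)‖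
        ≤ (Bd.card : ℝ) * E := by
      calc ‖∑ j ∈ Bd, Complex.exp (Complex.I * (μ n j) * t - (σ n j) ^ 2 * t ^ 2 / 2)‖
          ≤ ∑ j ∈ Bd, ‖Complex.exp (Complex.I * (μ n j) * t - (σ n j) ^ 2 * t ^ 2 / 2)‖ :=
            norm_sum_le _ _
        _ ≤ ∑ _j ∈ Bd, E := Finset.sum_le_sum (fun j _ => habsle n j t)
        _ = (Bd.card : ℝ) * E := by simp [mul_comm]
    have hcard : (Gd.card : ℝ) = n - Bd.card := by
      have h := Finset.card_filter_add_card_filter_not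
        (s := (Finset.univ : Finset (Fin n))) (p := fun j => (μ n j, σ n j) = (μ₀, σ₀))
      have h2 : Gd.card + Bd.card = n := by
        rw [hGd, hBd]; simpa [Finset.card_univ, Ne] using h
      push_cast [← h2]; ring
    have hBprop := hprop n
    rw [← hBd] at hBprop
    have hsum : (n:ℝ) * (1 - 2*ε₀) * E ≤
        ‖∑ j, Complex.exp (Complex.I * (μ n j) * t - (σ n j) ^ 2 * t ^ 2 / 2)‖ := by
      rw [hsplit]
      calc (n:ℝ) * (1 - 2*ε₀) * E
          ≤ (Gd.card : ℝ) * E - (Bd.card : ℝ) * E := by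
            rw [hcard]
            nlinarith [hEpos.le]
        _ ≤ ‖∑ j ∈ Gd, Complex.exp (Complex.I * (μ n j) * t - (σ n j) ^ 2 * t ^ 2 / 2)‖
              - ‖∑ j ∈ Bd, Complex.exp (Complex.I * (μ n j) * t - (σ n j) ^ 2 * t ^ 2 / 2)‖ := by
            rw [hGabs]; linarith [hBabs]
        _ ≤ _ := by
            have := norm_add_le
              (∑ j ∈ Gd, Complex.exp (Complex.I * (μ n j) * t - (σ n j) ^ 2 * t ^ 2 / 2)
                + ∑ j ∈ Bd, Complex.exp (Complex.I * (μ n j) * t - (σ n j) ^ 2 * t ^ 2 / 2))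
              (-∑ j ∈ Bd, Complex.exp (Complex.I * (μ n j) * t - (σ n j) ^ 2 * t ^ 2 / 2))
            simp only [add_neg_cancel_right, norm_neg] at this
            linarith [this]
    rw [hφ, norm_mul, Complex.norm_real, Real.norm_eq_abs, abs_of_pos (by positivity)]
    calc (1 - 2*ε₀) * E = (1/n) * ((n:ℝ) * (1 - 2*ε₀) * E) := by field_simp
      _ ≤ _ := mul_le_mul_of_nonneg_left hsum (by positivity)
  -- continuity
  have hcont : ∀ n : ℕ, Continuous (fun t : ℝ => ‖φ n t‖) := by
    intro n
    have heq : (fun t : ℝ => φ n t) = fun t : ℝ => ((1 / n : ℝ) : ℂ) *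
        ∑ j, Complex.exp (Complex.I * (μ n j) * t - (σ n j) ^ 2 * t ^ 2 / 2) := funext (hφ n)
    apply continuous_norm.comp
    rw [show (φ n) = fun t : ℝ => ((1 / n : ℝ) : ℂ) *
        ∑ j, Complex.exp (Complex.I * (μ n j) * t - (σ n j) ^ 2 * t ^ 2 / 2) from heq]
    fun_prop
  -- main eventual bounds
  have hlogTop : Tendsto (fun n : ℕ => Real.log n) atTop atTop :=
    Real.tendsto_log_atTop.comp tendsto_natCast_atTop_atTop
  set K : ℝ := max (2 * γ / σ₀ ^ 2) (max (-C / (2 * γ)) 1) with hK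
  have hev : ∀ᶠ n : ℕ in atTop, 1 ≤ n ∧ K < Real.log n := by
    filter_upwards [eventually_ge_atTop 1, hlogTop.eventually_gt_atTop K] with n h1 h2
    exact ⟨h1, h2⟩
  -- the squeeze bounds
  have hbound : ∀ᶠ n : ℕ in atTop,
      Real.sqrt (1 + C / (2 * γ * Real.log n)) ≤ tn n / (Real.sqrt (2 * γ * Real.log n) / σ₀)
      ∧ tn n / (Real.sqrt (2 * γ * Real.log n) / σ₀) ≤ 1 := by
    filter_upwards [hev] with n hn
    obtain ⟨hn1, hnK⟩ := hn
    have hn0 : 0 < n := hn1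
    have hnpos : (0:ℝ) < n := Nat.cast_pos.2 hn0
    set Ln := Real.log n with hLn
    have hLnpos : 0 < Ln := lt_of_lt_of_le (by positivity : (0:ℝ) < 1) (le_trans (le_max_right _ _ |>.trans (le_max_right _ _)) hnK.le)
    have hLn1 : 2 * γ / σ₀ ^ 2 < Ln := lt_of_le_of_lt (le_max_left _ _) hnK
    have hLn2 : -C / (2 * γ) < Ln := lt_of_le_of_lt ((le_max_left _ _).trans (le_max_right _ _)) hnK
    have hargpos : 0 < 2 * γ * Ln + C := by
      have := (div_lt_iff₀ (by positivity : (0:ℝ) < 2 * γ)).1 hLn2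
      linarith
    have hUpos : 0 < Real.sqrt (2 * γ * Ln) / σ₀ := by
      apply div_pos _ hσ
      exact Real.sqrt_pos.2 (by positivity)
    -- n^(-γ) = exp(-γ Ln)
    have hpow : (n : ℝ) ^ (-γ) = Real.exp (-γ * Ln) := by
      rw [Real.rpow_def_of_pos hnpos, hLn]; ring_nf
    set S := {t : ℝ | t ∈ Set.Icc 0 Ln ∧ ‖φ n t‖ = (n : ℝ) ^ (-γ)} with hS
    -- value at 0
    have hφ0 : ‖φ n 0‖ = 1 := by
      rw [hφ]
      simp [Finset.card_univ, abs_of_pos, hnpos.ne']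
    -- value at Ln is below n^(-γ)
    have hφLn : ‖φ n Ln‖ < (n : ℝ) ^ (-γ) := by
      refine lt_of_le_of_lt (hupper n hn0 Ln) ?_
      rw [hpow]
      apply Real.exp_lt_exp.2
      have h := (div_lt_iff₀ (by positivity : (0:ℝ) < σ₀ ^ 2)).1 hLn1
      nlinarith
    have hpow1 : (n : ℝ) ^ (-γ) ≤ 1 := by
      rw [hpow]
      exact Real.exp_le_one_iff.2 (by nlinarith)
    -- nonemptiness via IVT
    have hne : S.Nonempty := by
      have hIcc : Set.Icc (‖φ n Ln‖) (‖φ n 0‖) ⊆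
          (fun t => ‖φ n t‖) '' Set.Icc 0 Ln :=
        intermediate_value_Icc' hLnpos.le (hcont n).continuousOn
      have hmem : (n : ℝ) ^ (-γ) ∈ Set.Icc (‖φ n Ln‖) (‖φ n 0‖) := by
        rw [hφ0]
        exact ⟨hφLn.le, hpow1⟩
      obtain ⟨t₀, ht₀, hft₀⟩ := hIcc hmem
      exact ⟨t₀, ht₀, hft₀⟩
    have hbdd : BddBelow S := ⟨0, fun t ht => ht.1.1⟩
    -- element upper bound
    have helemU : ∀ t ∈ S, t ≤ Real.sqrt (2 * γ * Ln) / σ₀ := by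
      intro t ht
      obtain ⟨⟨ht0, _⟩, habs_t⟩ := ht
      have h1 : Real.exp (-γ * Ln) ≤ Real.exp (-(σ₀ ^ 2 * t ^ 2 / 2)) := by
        rw [← hpow, ← habs_t]
        exact hupper n hn0 t
      have h2 : σ₀ ^ 2 * t ^ 2 ≤ 2 * γ * Ln := by
        have := Real.exp_le_exp.1 h1
        linarith
      have h3 : t * σ₀ ≤ Real.sqrt (2 * γ * Ln) := by
        calc t * σ₀ = Real.sqrt ((t * σ₀) ^ 2) := (Real.sqrt_sq (by positivity)).symm
          _ ≤ _ := Real.sqrt_le_sqrt (by nlinarith)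
      rw [le_div_iff₀ hσ]
      exact h3
    -- element lower bound
    have helemL : ∀ t ∈ S, Real.sqrt (2 * γ * Ln + C) / σ₀ ≤ t := by
      intro t ht
      obtain ⟨⟨ht0, _⟩, habs_t⟩ := ht
      have h1 : (1 - 2 * ε₀) * Real.exp (-(σ₀ ^ 2 * t ^ 2 / 2)) ≤ Real.exp (-γ * Ln) := by
        rw [← hpow, ← habs_t]
        exact hlower n hn0 t
      have h1' : Real.exp (Real.log (1 - 2 * ε₀) + -(σ₀ ^ 2 * t ^ 2 / 2)) ≤ Real.exp (-γ * Ln) := by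
        rwa [Real.exp_add, Real.exp_log h2ε]
      have h2 : 2 * γ * Ln + C ≤ σ₀ ^ 2 * t ^ 2 := by
        have := Real.exp_le_exp.1 h1'
        rw [hC]; linarith
      have h3 : Real.sqrt (2 * γ * Ln + C) ≤ t * σ₀ := by
        calc Real.sqrt (2 * γ * Ln + C) ≤ Real.sqrt ((t * σ₀) ^ 2) :=
              Real.sqrt_le_sqrt (by nlinarith)
          _ = t * σ₀ := Real.sqrt_sq (by positivity)
      rw [div_le_iff₀ hσ]
      exact h3
    -- bounds on tn
    have htnU : tn n ≤ Real.sqrt (2 * γ * Ln) / σ₀ := by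
      obtain ⟨t₀, ht₀⟩ := hne
      rw [htn]
      exact le_trans (csInf_le hbdd ht₀) (helemU t₀ ht₀)
    have htnL : Real.sqrt (2 * γ * Ln + C) / σ₀ ≤ tn n := by
      rw [htn]
      exact le_csInf hne helemL
    have hsq : 0 < Real.sqrt (2 * γ * Ln) := Real.sqrt_pos.2 (by positivity)
    constructor
    · have hgeq : Real.sqrt (1 + C / (2 * γ * Ln)) =
          (Real.sqrt (2 * γ * Ln + C) / σ₀) / (Real.sqrt (2 * γ * Ln) / σ₀) := by
        rw [show (1:ℝ) + C / (2 * γ * Ln) = (2 * γ * Ln + C) / (2 * γ * Ln) by field_simp]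
        rw [Real.sqrt_div hargpos.le]
        field_simp
      rw [hgeq]
      exact div_le_div_of_nonneg_right htnL hUpos.le
    · rw [div_le_one hUpos]
      exact htnU
  -- limiting argument
  have hg : Tendsto (fun n : ℕ => Real.sqrt (1 + C / (2 * γ * Real.log n))) atTop (nhds 1) := by
    have h0 : Tendsto (fun n : ℕ => C / (2 * γ * Real.log n)) atTop (nhds 0) :=
      Tendsto.div_atTop tendsto_const_nhds (hlogTop.const_mul_atTop (by positivity))
    have h1 : Tendsto (fun n : ℕ => 1 + C / (2 * γ * Real.log n)) atTop (nhds 1) := by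
      simpa using tendsto_const_nhds.add h0
    have := (Real.continuous_sqrt.tendsto 1).comp h1
    simpa [Function.comp_def] using this
  exact tendsto_of_tendsto_of_tendsto_of_le_of_le' hg tendsto_const_nhds
    (hbound.mono (fun n h => h.1)) (hbound.mono (fun n h => h.2))
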